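/- arXiv:1706.06059 — 3 statements merged into one kernel-verified Lean document; each statement's English description precedes it below -/
import Mathlib

section
/- Let f and g be graph-equivalent continuous functions on [0,1]. If f realizes a valid chiral merge tree T, then g also realizes T. -/
open scoped Classical

/-- Chiral merge trees: binary trees with a real label at every node,
and a left/right ordering of the children of each internal node. -/
inductive CMT : Type where
  | leaf (a : ℝ) : CMT
  | node (a : ℝ) (l r : CMT) : CMT

namespace CMT

/-- The label of the root of a chiral merge tree. -/
def label : CMT → ℝ
  | leaf a => a
  | node a _ _ => a

/-- The minimum leaf label of a chiral merge tree. -/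
def minLeaf : CMT → ℝ
  | leaf a => a
  | node _ l r => min (minLeaf l) (minLeaf r)

/-- The list of all labels of nodes of a chiral merge tree. -/
def labelList : CMT → List ℝ
  | leaf a => [a]
  | node a l r => a :: (labelList l ++ labelList r)

/-- In every subtree `node a l r`, the root labels of `l` and `r` are `< a`. -/
def LocalValid : CMT → Prop
  | leaf _ => True
  | node a l r => label l < a ∧ label r < a ∧ LocalValid l ∧ LocalValid r

/-- A chiral merge tree is valid if its labels are pairwise distinct and in every
subtree `node a l r` the root labels of `l` and `r` are strictly less than `a`. -/
def Valid (T : CMT) : Prop := T.labelList.Nodup ∧ T.LocalValid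

/-- The Elder barcode of a chiral merge tree: `Elder (leaf a) = {[a,∞)}`; for
`node a l r`, with `m` the larger of the two minimum leaf labels of `l` and `r`,
the unbounded bar `[m,∞)` of `Elder l ∪ Elder r` is replaced by `[m, a)`. -/
def Elder : CMT → Set (Set ℝ)
  | leaf a => {Set.Ici a}
  | node a l r =>
      insert (Set.Ico (max (minLeaf l) (minLeaf r)) a)
        ((Elder l ∪ Elder r) \ {Set.Ici (max (minLeaf l) (minLeaf r))})

/-- The subtree of a chiral merge tree at the address `w` (a word in
`{L,R}`, encoded as `false`/`true`), if it exists. -/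
def subtree? : CMT → List Bool → Option CMT
  | t, [] => some t
  | leaf _, _ :: _ => none
  | node _ l _, false :: w => subtree? l w
  | node _ _ r, true :: w => subtree? r w

/-- The label of the node of `T` at the address `w`, if such a node exists. -/
def nodeLabel? (T : CMT) (w : List Bool) : Option ℝ := (T.subtree? w).map label

/-- `T.MemS t w` means: `w` is the address of a node `v` of `T` with label `≤ t`
whose parent, if it exists, has label `> t`.  Thus `S_T(t) = {w // T.MemS t w}`. -/
def MemS (T : CMT) (t : ℝ) (w : List Bool) : Prop :=
  (∃ a, T.nodeLabel? w = some a ∧ a ≤ t) ∧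
  (∀ a, w ≠ [] → T.nodeLabel? w.dropLast = some a → t < a)

/-- The in-order (left subtree, root, right subtree) traversal of the node
addresses of a chiral merge tree. -/
def addrList : CMT → List (List Bool)
  | leaf _ => [[]]
  | node _ l r =>
      (addrList l).map (List.cons false) ++ [[]] ++ (addrList r).map (List.cons true)

/-- The node at address `u` strictly precedes the node at address `v`
in the in-order order on the nodes of `T`. -/
def InOrderLT (T : CMT) (u v : List Bool) : Prop :=
  T.addrList.idxOf u < T.addrList.idxOf v

/-- The node at address `u` precedes or equals the node at address `v`
in the in-order order on the nodes of `T`. -/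
def InOrderLE (T : CMT) (u v : List Bool) : Prop :=
  T.addrList.idxOf u ≤ T.addrList.idxOf v

/-- The number of nodes of a chiral merge tree. -/
def numNodes : CMT → ℕ
  | leaf _ => 1
  | node _ l r => 1 + numNodes l + numNodes r

/-- The number of leaves of a chiral merge tree. -/
def numLeaves : CMT → ℕ
  | leaf _ => 1
  | node _ l r => numLeaves l + numLeaves r

/-- The set of labels of leaves of a chiral merge tree. -/
def leafLabels : CMT → Set ℝ
  | leaf a => {a}
  | node _ l r => leafLabels l ∪ leafLabels r

/-- The set of labels of internal (binary) nodes of a chiral merge tree. -/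
def internalLabels : CMT → Set ℝ
  | leaf _ => ∅
  | node a l r => insert a (internalLabels l ∪ internalLabels r)

/-- The in-order traversal list of the nodes (as subtrees) of a chiral merge tree. -/
def trav : CMT → List CMT
  | leaf a => [leaf a]
  | node a l r => trav l ++ [node a l r] ++ trav r

/-- Whether a node is a leaf. -/
def isLeaf : CMT → Prop
  | leaf _ => True
  | node _ _ _ => False

end CMT
/-- The `j`-th bar of the barcode: `I₁ = [b₁, ∞)` (index `0`) and
`I_j = [b_j, d_j)` for `j ≥ 2` (indices `≠ 0`). -/
def bar {N : ℕ} (b d : Fin N → ℝ) (j : Fin N) : Set ℝ :=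
  if (j : ℕ) = 0 then Set.Ici (b j) else Set.Ico (b j) (d j)

/-- The barcode `B = {I₁, …, I_N}` as a set of intervals. -/
def barcodeOf {N : ℕ} (b d : Fin N → ℝ) : Set (Set ℝ) := Set.range (bar b d)

/-- `μ_B(I_j)`: the number of indices `k` with `I_j` strictly contained in `I_k`. -/
noncomputable def mu {N : ℕ} (b d : Fin N → ℝ) (j : Fin N) : ℕ :=
  Nat.card {k : Fin N // bar b d j ⊂ bar b d k}
/-- The sublevel set `{x ∈ [0,1] : f x ≤ t}`. -/
def sublevel (f : ℝ → ℝ) (t : ℝ) : Set ℝ := {x | x ∈ Set.Icc (0:ℝ) 1 ∧ f x ≤ t}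

/-- The set of connected components of `A ⊆ ℝ` (maximal connected subsets). -/
def Components (A : Set ℝ) : Set (Set ℝ) := {C | ∃ x ∈ A, C = connectedComponentIn A x}

/-- The left-to-right strict order on subsets of `ℝ`:
`C` is entirely to the left of `D`. -/
def CompLT (C D : Set ℝ) : Prop := ∀ x ∈ C, ∀ y ∈ D, x < y

/-- `f` and `g` are graph-equivalent: there is an increasing homeomorphism
`φ : [0,1] → [0,1]` with `f = g ∘ φ` on `[0,1]`. -/
def GraphEquiv (f g : ℝ → ℝ) : Prop :=
  ∃ φ : ℝ → ℝ, ContinuousOn φ (Set.Icc 0 1) ∧ StrictMonoOn φ (Set.Icc 0 1) ∧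
    Set.MapsTo φ (Set.Icc 0 1) (Set.Icc 0 1) ∧
    Set.SurjOn φ (Set.Icc 0 1) (Set.Icc 0 1) ∧
    ∀ x ∈ Set.Icc (0:ℝ) 1, f x = g (φ x)

/-- `f : [0,1] → ℝ` is Morse-like: continuous, and there are
`0 = p₀ < p₁ < ⋯ < p_m = 1` such that `f` is strictly monotone on each
`[p_{i-1}, p_i]`, consecutive intervals have opposite directions of monotonicity,
and the values `f(p₀), …, f(p_m)` are pairwise distinct. -/
def MorseLike (f : ℝ → ℝ) : Prop :=
  ContinuousOn f (Set.Icc 0 1) ∧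
  ∃ (m : ℕ) (p : ℕ → ℝ), p 0 = 0 ∧ p m = 1 ∧ (∀ i < m, p i < p (i + 1)) ∧
    (∀ i < m, StrictMonoOn f (Set.Icc (p i) (p (i + 1))) ∨
      StrictAntiOn f (Set.Icc (p i) (p (i + 1)))) ∧
    (∀ i, i + 1 < m →
      (StrictMonoOn f (Set.Icc (p i) (p (i + 1))) ↔
        StrictAntiOn f (Set.Icc (p (i + 1)) (p (i + 2))))) ∧
    (∀ i j, i ≤ m → j ≤ m → i ≠ j → f (p i) ≠ f (p j))

/-- `f` realizes the barcode `B`: for all `r ≤ t`, the cardinality of the image of the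
inclusion-induced map on connected components of sublevel sets (i.e. the number of
components of `{f ≤ t}` containing some component of `{f ≤ r}`) equals the number of
intervals of `B` containing both `r` and `t`. -/
def RealizesBarcode (f : ℝ → ℝ) (B : Set (Set ℝ)) : Prop :=
  ∀ r t : ℝ, r ≤ t →
    {D | D ∈ Components (sublevel f t) ∧ ∃ C ∈ Components (sublevel f r), C ⊆ D}.ncard
      = {I | I ∈ B ∧ r ∈ I ∧ t ∈ I}.ncard

/-- `f` realizes the valid chiral merge tree `T`: for each `t` there is an
order-isomorphism `α t` from the components of `{f ≤ t}` (left-to-right order) to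
`S_T(t)` (in-order order), commuting with the inclusion-induced maps on components
and the shift maps `σ_{tr}` (which send each node to its unique ancestor in `S_T(t)`;
being an ancestor is expressed by the address being a prefix). -/
def RealizesCMT (f : ℝ → ℝ) (T : CMT) : Prop :=
  ∃ α : (t : ℝ) → {C : Set ℝ // C ∈ Components (sublevel f t)} →
      {w : List Bool // T.MemS t w},
    (∀ t : ℝ, Function.Bijective (α t)) ∧
    (∀ (t : ℝ) (C D : {C : Set ℝ // C ∈ Components (sublevel f t)}),
      CompLT C.1 D.1 ↔ T.InOrderLT (α t C).1 (α t D).1) ∧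
    (∀ r t : ℝ, r ≤ t →
      ∀ (C : {C : Set ℝ // C ∈ Components (sublevel f r)})
        (D : {C : Set ℝ // C ∈ Components (sublevel f t)}),
        C.1 ⊆ D.1 → (α t D).1 <+: (α r C).1)

/-- `f` is piecewise linear on `[0,1]`. -/
def PiecewiseLinear (f : ℝ → ℝ) : Prop :=
  ∃ (m : ℕ) (p : ℕ → ℝ), p 0 = 0 ∧ p m = 1 ∧ (∀ i < m, p i < p (i + 1)) ∧
    ∀ i < m, ∃ c e : ℝ, ∀ x ∈ Set.Icc (p i) (p (i + 1)), f x = c * x + e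
/-- The interval module `k_I` at time `t` is the `k`-vector space
`PLift (t ∈ I) → k` of functions from (proofs of) `t ∈ I` to `k`, which is
one-dimensional if `t ∈ I` and the zero space otherwise.  `intervalShift k I r t` is
its shift map `k_I(r) → k_I(t)`: the identity when `r, t ∈ I` and zero otherwise. -/
noncomputable def intervalShift (k : Type) [Field k] (I : Set ℝ) (r t : ℝ) :
    (PLift (r ∈ I) → k) →ₗ[k] (PLift (t ∈ I) → k) where
  toFun x := fun _ => if hr : r ∈ I then x ⟨hr⟩ else 0
  map_add' x y := by
    funext ht
    by_cases hr : r ∈ I <;> simp [hr]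
  map_smul' c x := by
    funext ht
    by_cases hr : r ∈ I <;> simp [hr]

/-- Components transfer under a homeomorphism of ℝ. -/
lemma components_image_of_mem (h : ℝ ≃ₜ ℝ) {A C : Set ℝ} (hC : C ∈ Components A) :
    h '' C ∈ Components (h '' A) := by
  obtain ⟨x, hx, rfl⟩ := hC
  exact ⟨h x, Set.mem_image_of_mem _ hx, h.image_connectedComponentIn hx⟩

lemma components_symm_image_of_mem (h : ℝ ≃ₜ ℝ) {A D : Set ℝ}
    (hD : D ∈ Components (h '' A)) : h.symm '' D ∈ Components A := by
  obtain ⟨x, ⟨y, hy, rfl⟩, rfl⟩ := hD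
  refine ⟨y, hy, ?_⟩
  rw [← h.image_connectedComponentIn hy, ← Set.image_comp]
  simp

/-- graph-equivalent continuous functions on `[0,1]` realize the
same valid chiral merge trees. -/
theorem graph_equiv_preserves_cmt (f g : ℝ → ℝ)
    (hf : ContinuousOn f (Set.Icc 0 1)) (hg : ContinuousOn g (Set.Icc 0 1))
    (hfg : GraphEquiv f g) (T : CMT) (hT : T.Valid) (hfT : RealizesCMT f T) :
    RealizesCMT g T := by
  classical
  obtain ⟨φ, hφc, hφm, hφmap, hφsurj, hfeq⟩ := hfg
  -- φ 0 = 0 and φ 1 = 1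
  have h01 : (0:ℝ) ∈ Set.Icc (0:ℝ) 1 := by constructor <;> norm_num
  have h11 : (1:ℝ) ∈ Set.Icc (0:ℝ) 1 := by constructor <;> norm_num
  have hφ0 : φ 0 = 0 := by
    obtain ⟨y, hy, hyv⟩ := hφsurj h01
    have h1 : (0:ℝ) ≤ φ 0 := (hφmap h01).1
    have h2 : φ 0 ≤ φ y := hφm.monotoneOn h01 hy hy.1
    linarith [hyv.le, hyv.ge]
  have hφ1 : φ 1 = 1 := by
    obtain ⟨y, hy, hyv⟩ := hφsurj h11
    have h1 : φ 1 ≤ 1 := (hφmap h11).2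
    have h2 : φ y ≤ φ 1 := hφm.monotoneOn hy h11 hy.2
    linarith [hyv.le, hyv.ge]
  -- extend φ to a strictly monotone surjection Φfun of ℝ
  set Φfun : ℝ → ℝ := fun x => if x ∈ Set.Icc (0:ℝ) 1 then φ x else x with hΦfun
  have hΦeq : ∀ x ∈ Set.Icc (0:ℝ) 1, Φfun x = φ x := fun x hx => if_pos hx
  have hmono : StrictMono Φfun := by
    intro x y hxy
    by_cases hx : x ∈ Set.Icc (0:ℝ) 1 <;> by_cases hy : y ∈ Set.Icc (0:ℝ) 1
    · show Φfun x < Φfun y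
      rw [hΦeq x hx, hΦeq y hy]
      exact hφm hx hy hxy
    · have hy1 : 1 < y := by
        rcases lt_or_ge y 0 with h | h
        · linarith [hx.1]
        · rcases le_or_gt y 1 with h' | h'
          · exact absurd ⟨h, h'⟩ hy
          · exact h'
      have : φ x ≤ 1 := (hφmap hx).2
      simp only [hΦfun, if_pos hx, if_neg hy]
      linarith
    · have hx0 : x < 0 := by
        rcases lt_or_ge x 0 with h | h
        · exact h
        · rcases le_or_gt x 1 with h' | h'
          · exact absurd ⟨h, h'⟩ hx
          · linarith [hy.2]
      have : (0:ℝ) ≤ φ y := (hφmap hy).1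
      simp only [hΦfun, if_neg hx, if_pos hy]
      linarith
    · show Φfun x < Φfun y
      show (if x ∈ Set.Icc (0:ℝ) 1 then φ x else x) < (if y ∈ Set.Icc (0:ℝ) 1 then φ y else y)
      rw [if_neg hx, if_neg hy]
      exact hxy
  have hsurj : Function.Surjective Φfun := by
    intro z
    by_cases hz : z ∈ Set.Icc (0:ℝ) 1
    · obtain ⟨y, hy, hyv⟩ := hφsurj hz
      exact ⟨y, by rw [hΦeq y hy]; exact hyv⟩
    · refine ⟨z, ?_⟩
      show (if z ∈ Set.Icc (0:ℝ) 1 then φ z else z) = z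
      rw [if_neg hz]
  set Φ : ℝ ≃o ℝ := StrictMono.orderIsoOfSurjective Φfun hmono hsurj with hΦdef
  have hΦcoe : ⇑Φ = Φfun := StrictMono.coe_orderIsoOfSurjective Φfun hmono hsurj
  set H : ℝ ≃ₜ ℝ := Φ.toHomeomorph with hHdef
  have hHcoe : ⇑H = Φfun := hΦcoe
  -- sublevel sets correspond
  have hsub : ∀ t : ℝ, sublevel g t = H '' sublevel f t := by
    intro t
    ext z
    constructor
    · rintro ⟨hz, hgz⟩
      obtain ⟨y, hy, hyv⟩ := hφsurj hz
      refine ⟨y, ⟨hy, ?_⟩, by rw [hHcoe, hΦeq y hy, hyv]⟩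
      rw [hfeq y hy, hyv]; exact hgz
    · rintro ⟨y, ⟨hy, hfy⟩, rfl⟩
      rw [hHcoe, hΦeq y hy]
      exact ⟨hφmap hy, by rw [← hfeq y hy]; exact hfy⟩
  -- transfer the realization along H
  obtain ⟨α, hα1, hα2, hα3⟩ := hfT
  have memS : ∀ (t : ℝ) (D : Set ℝ), D ∈ Components (sublevel g t) →
      H.symm '' D ∈ Components (sublevel f t) := by
    intro t D hD
    rw [hsub t] at hD
    exact components_symm_image_of_mem H hD
  refine ⟨fun t D => α t ⟨H.symm '' D.1, memS t D.1 D.2⟩, ?_, ?_, ?_⟩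
  · intro t
    have hm : Function.Bijective
        (fun D : {C : Set ℝ // C ∈ Components (sublevel g t)} =>
          (⟨H.symm '' D.1, memS t D.1 D.2⟩ :
            {C : Set ℝ // C ∈ Components (sublevel f t)})) := by
      constructor
      · intro D1 D2 h12
        have : H.symm '' D1.1 = H.symm '' D2.1 := congrArg Subtype.val h12
        have := congrArg (Set.image H) this
        rw [← Set.image_comp, ← Set.image_comp] at this
        simp only [Homeomorph.self_comp_symm, Set.image_id] at this
        exact Subtype.ext this
      · intro C
        have hmem : H '' C.1 ∈ Components (sublevel g t) := by
          rw [hsub t]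
          exact components_image_of_mem H C.2
        refine ⟨⟨H '' C.1, hmem⟩, ?_⟩
        apply Subtype.ext
        simp only
        rw [← Set.image_comp]
        simp
    exact (hα1 t).comp hm
  · intro t C D
    rw [← hα2 t]
    show CompLT C.1 D.1 ↔ CompLT (H.symm '' C.1) (H.symm '' D.1)
    constructor
    · rintro hCD x ⟨x', hx', rfl⟩ y ⟨y', hy', rfl⟩
      exact Φ.symm.lt_iff_lt.mpr (hCD x' hx' y' hy')
    · intro hCD x hx y hy
      have h2 : Φ.symm x < Φ.symm y := hCD (H.symm x) ⟨x, hx, rfl⟩ (H.symm y) ⟨y, hy, rfl⟩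
      exact Φ.symm.lt_iff_lt.mp h2
  · intro r t hrt C D hCD
    exact hα3 r t hrt ⟨H.symm '' C.1, memS r C.1 C.2⟩ ⟨H.symm '' D.1, memS t D.1 D.2⟩
      (Set.image_mono hCD)
end

section
/- Let T be a valid chiral merge tree and let r ≤ t be real numbers. Then the shift map σ_{tr} : S_T(r) → S_T(t) is monotone with respect to the in-order order: if u, v ∈ S_T(r) with u preceding or equal to v in the in-order order, then σ_{tr}(u) precedes or equals σ_{tr}(v) in the in-order order. -/
open scoped Classical

namespace CMTAux

open CMT

lemma subtree_append : ∀ (x : List Bool) (T s : CMT) (y : List Bool),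
    T.subtree? x = some s → T.subtree? (x ++ y) = s.subtree? y := by
  intro x
  induction x with
  | nil =>
    intro T s y h
    simp [CMT.subtree?] at h
    subst h; rfl
  | cons b x ih =>
    intro T s y h
    cases T with
    | leaf a => simp [CMT.subtree?] at h
    | node a l r =>
      cases b <;> simp only [CMT.subtree?, List.cons_append] at h ⊢ <;> exact ih _ _ _ h

lemma subtree_none : ∀ (x : List Bool) (T : CMT) (y : List Bool),
    T.subtree? x = none → T.subtree? (x ++ y) = none := by
  intro x
  induction x with
  | nil => intro T y h; simp [CMT.subtree?] at h
  | cons b x ih =>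
    intro T y h
    cases T with
    | leaf a => cases b <;> rfl
    | node a l r =>
      cases b <;> simp only [CMT.subtree?, List.cons_append] at h ⊢ <;> exact ih _ _ h

lemma subtree_of_prefix {T : CMT} {x y : List Bool} (hxy : x <+: y) {s : CMT}
    (h : T.subtree? y = some s) : ∃ s', T.subtree? x = some s' := by
  obtain ⟨c, rfl⟩ := hxy
  cases hx : T.subtree? x with
  | none => rw [subtree_none x T c hx] at h; exact absurd h (by simp)
  | some s' => exact ⟨s', rfl⟩

lemma label_le : ∀ (x : List Bool) (T : CMT), T.LocalValid → ∀ s, T.subtree? x = some s →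
    s.label ≤ T.label := by
  intro x
  induction x with
  | nil => intro T _ s h; simp [CMT.subtree?] at h; subst h; rfl
  | cons b x ih =>
    intro T hT s h
    cases T with
    | leaf a => simp [CMT.subtree?] at h
    | node a l r =>
      obtain ⟨h1, h2, h3, h4⟩ := hT
      cases b <;> simp only [CMT.subtree?] at h
      · exact le_trans (ih l h3 s h) (le_of_lt h1)
      · exact le_trans (ih r h4 s h) (le_of_lt h2)

lemma localValid_subtree : ∀ (x : List Bool) (T : CMT), T.LocalValid →
    ∀ s, T.subtree? x = some s → s.LocalValid := by
  intro x
  induction x with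
  | nil => intro T hT s h; simp [CMT.subtree?] at h; subst h; exact hT
  | cons b x ih =>
    intro T hT s h
    cases T with
    | leaf a => simp [CMT.subtree?] at h
    | node a l r =>
      obtain ⟨_, _, h3, h4⟩ := hT
      cases b <;> simp only [CMT.subtree?] at h
      · exact ih l h3 s h
      · exact ih r h4 s h

lemma mem_addrList : ∀ (T : CMT) (w : List Bool) (s : CMT),
    T.subtree? w = some s → w ∈ T.addrList := by
  intro T
  induction T with
  | leaf a =>
    intro w s h
    cases w with
    | nil => simp [CMT.addrList]
    | cons b w => simp [CMT.subtree?] at h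
  | node a l r ihl ihr =>
    intro w s h
    cases w with
    | nil => simp [CMT.addrList]
    | cons b w =>
      cases b <;> simp only [CMT.subtree?] at h <;>
        simp only [CMT.addrList, List.mem_append, List.mem_map, List.mem_singleton]
      · exact Or.inl (Or.inl ⟨w, ihl w s h, rfl⟩)
      · exact Or.inr ⟨w, ihr w s h, rfl⟩

/-- Elements of `S_T(t)` that are prefix-comparable are equal. -/
lemma memS_prefix_eq {T : CMT} (hT : T.LocalValid) {t : ℝ} {x y : List Bool}
    (hx : T.MemS t x) (hy : T.MemS t y) (hxy : x <+: y) : x = y := by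
  obtain ⟨c, rfl⟩ := hxy
  rcases eq_or_ne c [] with rfl | hc
  · simp
  exfalso
  obtain ⟨⟨ax, hax, haxt⟩, -⟩ := hx
  obtain ⟨⟨ay, hay, -⟩, hy2⟩ := hy
  rw [CMT.nodeLabel?, Option.map_eq_some_iff] at hax hay
  obtain ⟨s, hs, rfl⟩ := hax
  obtain ⟨s', hs', -⟩ := hay
  -- subtree at (x ++ c) exists, so subtree of s at c exists, hence at c.dropLast
  rw [subtree_append x T s c hs] at hs'
  obtain ⟨s₂, hs₂⟩ := subtree_of_prefix (List.dropLast_prefix c) hs'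
  have hlab : s₂.label ≤ s.label :=
    label_le c.dropLast s (localValid_subtree x T hT s hs) s₂ hs₂
  have hne : x ++ c ≠ [] := by
    cases c with
    | nil => exact absurd rfl hc
    | cons b c => simp
  have hdrop : (x ++ c).dropLast = x ++ c.dropLast := List.dropLast_append_of_ne_nil hc
  have := hy2 s₂.label hne (by
    rw [hdrop, CMT.nodeLabel?, subtree_append x T s c.dropLast hs, hs₂, Option.map_some])
  linarith

/-- The lexicographic key of an address. -/
def K (w : List Bool) : List ℤ := (w.map fun b => if b then 1 else -1) ++ [0]

def Klt (x y : List Bool) : Prop := List.Lex (· < ·) (K x) (K y)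

lemma K_cons (b : Bool) (w : List Bool) : K (b :: w) = (if b then 1 else -1) :: K w := by
  simp [K]

lemma Klt_cons_same {b : Bool} {x y : List Bool} : Klt (b :: x) (b :: y) ↔ Klt x y := by
  rw [Klt, K_cons, K_cons]
  exact List.lex_cons_iff

lemma Klt_false_nil (x : List Bool) : Klt (false :: x) [] := by
  rw [Klt, K_cons]
  exact List.Lex.rel (by norm_num)

lemma Klt_nil_true (y : List Bool) : Klt [] (true :: y) := by
  rw [Klt, K_cons]
  exact List.Lex.rel (by norm_num)

lemma Klt_false_true (x y : List Bool) : Klt (false :: x) (true :: y) := by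
  rw [Klt, K_cons, K_cons]
  exact List.Lex.rel (by norm_num)

lemma addr_pairwise : ∀ T : CMT, T.addrList.Pairwise Klt := by
  intro T
  induction T with
  | leaf a => simp [CMT.addrList]
  | node a l r ihl ihr =>
    rw [CMT.addrList]
    rw [List.pairwise_append, List.pairwise_append]
    refine ⟨⟨List.pairwise_map.mpr (ihl.imp fun h => Klt_cons_same.mpr h), ?_, ?_⟩, ?_, ?_⟩
    · simp
    · intro x hx y hy
      simp only [List.mem_map] at hx
      simp only [List.mem_singleton] at hy
      obtain ⟨x', -, rfl⟩ := hx
      subst hy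
      exact Klt_false_nil x'
    · exact List.pairwise_map.mpr (ihr.imp fun h => Klt_cons_same.mpr h)
    · intro x hx y hy
      simp only [List.mem_append, List.mem_map, List.mem_singleton] at hx hy
      obtain ⟨y', -, rfl⟩ := hy
      rcases hx with ⟨x', -, rfl⟩ | rfl
      · exact Klt_false_true x' y'
      · exact Klt_nil_true y'

lemma Klt_asymm {x y : List Bool} (h : Klt x y) (h' : Klt y x) : False :=
  (List.Lex.asymm (α := ℤ) (· < ·)).asymm _ _ h h'

lemma K_inj {x y : List Bool} (h : K x = K y) : x = y := by
  have hlen : x.length = y.length := by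
    have := congrArg List.length h
    simpa [K] using this
  have := (List.append_inj' h (by simp)).1
  have hinj : Function.Injective fun b : Bool => if b then (1 : ℤ) else -1 := by
    intro a b hab
    cases a <;> cases b <;> simp_all
  exact List.map_injective_iff.mpr hinj this

lemma Klt_total {x y : List Bool} (h : x ≠ y) : Klt x y ∨ Klt y x := by
  rcases trichotomous_of (List.Lex (α := ℤ) (· < ·)) (K x) (K y) with h1 | h1 | h1
  · exact Or.inl h1
  · exact absurd (K_inj h1) h
  · exact Or.inr h1

/-- Lex order of prefix-incomparable addresses is preserved under extension. -/
lemma Klt_ext : ∀ (a : List Bool) {b u v : List Bool}, a <+: u → b <+: v →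
    ¬ a <+: b → ¬ b <+: a → Klt a b → Klt u v := by
  intro a
  induction a with
  | nil => intro b u v _ _ hab _ _; exact absurd (List.nil_prefix) hab
  | cons x a ih =>
    intro b u v hau hbv hab hba h
    cases b with
    | nil => exact absurd (List.nil_prefix) hba
    | cons y b' =>
      obtain ⟨c, rfl⟩ := hau
      obtain ⟨d, rfl⟩ := hbv
      simp only [List.cons_append]
      by_cases hxy : x = y
      · subst hxy
        rw [List.cons_prefix_cons, not_and_or] at hab hba
        have hab' : ¬ a <+: b' := hab.resolve_left (by simp)
        have hba' : ¬ b' <+: a := hba.resolve_left (by simp)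
        have h' : Klt a b' := Klt_cons_same.mp h
        exact Klt_cons_same.mpr (ih (List.prefix_append a c) (List.prefix_append b' d) hab' hba' h')
      · have hne : (if x then (1:ℤ) else -1) ≠ (if y then 1 else -1) := by
          cases x <;> cases y <;> simp_all
        rw [Klt, K_cons, K_cons] at h
        rw [Klt, K_cons, K_cons]
        revert h hne
        generalize (if x then (1:ℤ) else -1) = cx
        generalize (if y then (1:ℤ) else -1) = cy
        intro hlex hneq
        cases hlex with
        | cons h => exact absurd rfl hneq
        | rel h => exact List.Lex.rel h

lemma idxOf_lt_of_pairwise {α : Type*} [BEq α] [LawfulBEq α]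
    {R : α → α → Prop} (hasym : ∀ x y, R x y → ¬ R y x) :
    ∀ {L : List α}, L.Pairwise R → ∀ {x y : α}, x ∈ L → y ∈ L → R x y →
    L.idxOf x < L.idxOf y := by
  intro L
  induction L with
  | nil => intro _ x y hx; cases hx
  | cons a L ih =>
    intro hL x y hx hy h
    have hxy : x ≠ y := fun he => hasym x y h (he ▸ he ▸ h)
    by_cases hax : a = x
    · subst hax
      have hay : a ≠ y := hxy
      rw [List.idxOf_cons, List.idxOf_cons, beq_self_eq_true,
        beq_eq_false_iff_ne.mpr hay, cond_true, cond_false]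
      exact Nat.succ_pos _
    · have hx' : x ∈ L := by
        rcases List.mem_cons.mp hx with rfl | hx' ; exact absurd rfl hax ; exact hx'
      by_cases hay : a = y
      · subst hay
        exact absurd (List.rel_of_pairwise_cons hL hx') (fun h' => hasym x a h h')
      · have hy' : y ∈ L := by
          rcases List.mem_cons.mp hy with rfl | hy' ; exact absurd rfl hay ; exact hy'
        rw [List.idxOf_cons, List.idxOf_cons, beq_eq_false_iff_ne.mpr hax,
            beq_eq_false_iff_ne.mpr hay, cond_false, cond_false]
        exact Nat.succ_lt_succ (ih hL.of_cons hx' hy' h)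

lemma memS_subtree {T : CMT} {t : ℝ} {w : List Bool} (h : T.MemS t w) :
    ∃ s, T.subtree? w = some s := by
  obtain ⟨⟨a, ha, -⟩, -⟩ := h
  rw [CMT.nodeLabel?, Option.map_eq_some_iff] at ha
  obtain ⟨s, hs, -⟩ := ha
  exact ⟨s, hs⟩

end CMTAux

/-- the shift map `σ_{tr} : S_T(r) → S_T(t)` of a valid chiral
merge tree (sending each node to its unique ancestor, i.e. prefix, in `S_T(t)`) is
monotone with respect to the in-order order. -/
theorem shift_map_inorder_monotone (T : CMT) (hT : T.Valid) (r t : ℝ) (hrt : r ≤ t)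
    (σ : {w : List Bool // T.MemS r w} → {w : List Bool // T.MemS t w})
    (hσ : ∀ v, (σ v).1 <+: v.1)
    (u v : {w : List Bool // T.MemS r w}) (huv : T.InOrderLE u.1 v.1) :
    T.InOrderLE (σ u).1 (σ v).1 := by
  have hLV := hT.2
  have pw := CMTAux.addr_pairwise T
  obtain ⟨su, hsu⟩ := CMTAux.memS_subtree u.2
  obtain ⟨sv, hsv⟩ := CMTAux.memS_subtree v.2
  obtain ⟨sa, hsa⟩ := CMTAux.memS_subtree (σ u).2
  obtain ⟨sb, hsb⟩ := CMTAux.memS_subtree (σ v).2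
  have hua := CMTAux.mem_addrList T _ _ hsu
  have hva := CMTAux.mem_addrList T _ _ hsv
  have haa := CMTAux.mem_addrList T _ _ hsa
  have hba := CMTAux.mem_addrList T _ _ hsb
  by_cases hab : (σ u).1 <+: (σ v).1
  · rw [CMT.InOrderLE, CMTAux.memS_prefix_eq hLV (σ u).2 (σ v).2 hab]
  by_cases hba' : (σ v).1 <+: (σ u).1
  · rw [CMT.InOrderLE, CMTAux.memS_prefix_eq hLV (σ v).2 (σ u).2 hba']
  have hne : (σ u).1 ≠ (σ v).1 := fun h => hab (h ▸ List.prefix_refl _)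
  rcases CMTAux.Klt_total hne with hk | hk
  · exact le_of_lt
      (CMTAux.idxOf_lt_of_pairwise (fun _ _ h h' => CMTAux.Klt_asymm h h') pw haa hba hk)
  · exfalso
    have hk' := CMTAux.Klt_ext _ (hσ v) (hσ u) hba' hab hk
    have hlt := CMTAux.idxOf_lt_of_pairwise
      (fun _ _ h h' => CMTAux.Klt_asymm h h') pw hva hua hk'
    exact absurd huv (not_le.mpr hlt)
end

section
/- Let f, g : [0,1] → ℝ be continuous functions, let m ≥ 1, and let 0 = p₀ < p₁ < ⋯ < p_m = 1 and 0 = q₀ < q₁ < ⋯ < q_m = 1 be such that f is strictly monotone on each interval [p_{i-1}, p_i], g is strictly monotone on each interval [q_{i-1}, q_i], and f(p_i) = g(q_i) for all 0 ≤ i ≤ m. Then there is an increasing homeomorphism φ : [0,1] → [0,1] with φ(p_i) = q_i for all i and f = g ∘ φ; in particular f and g are graph-equivalent. -/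
open scoped Classical

namespace StateSeventeenAux
open Set

/-- A strictly monotone surjection between closed intervals is continuous. -/
lemma strictMonoOn_surjOn_continuousOn {ψ : ℝ → ℝ} {a b c d : ℝ}
    (hmono : StrictMonoOn ψ (Icc a b))
    (hmaps : MapsTo ψ (Icc a b) (Icc c d))
    (hsurj : SurjOn ψ (Icc a b) (Icc c d))
    (hψa : ψ a = c) (hψb : ψ b = d) :
    ContinuousOn ψ (Icc a b) := by
  intro x hx
  have hab : a ≤ b := hx.1.trans hx.2
  have hright : x < b → ContinuousWithinAt ψ (Ici x) x := by
    intro hxb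
    refine hmono.continuousWithinAt_right_of_exists_between
      (Filter.mem_of_superset (Icc_mem_nhdsGE_of_mem ⟨le_rfl, hxb⟩)
        (Icc_subset_Icc_left hx.1)) ?_
    intro y hy
    have hxd : ψ x < d := by
      rw [← hψb]; exact hmono hx ⟨hab, le_rfl⟩ hxb
    have hv : min y d ∈ Icc c d :=
      ⟨le_min (((hmaps hx).1.trans_lt hy).le) ((hmaps hx).1.trans hxd.le),
        min_le_right _ _⟩
    obtain ⟨z, hz, hzv⟩ := hsurj hv
    exact ⟨z, hz, by rw [hzv]; exact ⟨lt_min hy hxd, min_le_left _ _⟩⟩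
  have hleft : a < x → ContinuousWithinAt ψ (Iic x) x := by
    intro hax
    refine hmono.continuousWithinAt_left_of_exists_between
      (Filter.mem_of_superset (Icc_mem_nhdsLE_of_mem ⟨hax, le_rfl⟩)
        (Icc_subset_Icc_right hx.2)) ?_
    intro y hy
    have hcx : c < ψ x := by
      rw [← hψa]; exact hmono ⟨le_rfl, hab⟩ hx hax
    have hv : max y c ∈ Icc c d :=
      ⟨le_max_right _ _, max_le ((hy.trans_le (hmaps hx).2).le) (hcx.le.trans (hmaps hx).2)⟩
    obtain ⟨z, hz, hzv⟩ := hsurj hv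
    exact ⟨z, hz, by rw [hzv]; exact ⟨le_max_left _ _, max_lt hy hcx⟩⟩
  have h1 : ContinuousWithinAt ψ (Icc a b ∩ Iic x) x := by
    rcases eq_or_lt_of_le hx.1 with h | h
    · refine (continuousWithinAt_singleton (f := ψ) (x := x)).mono ?_
      rintro y ⟨hy1, hy2⟩
      have : y = x := le_antisymm hy2 (h ▸ hy1.1)
      simp [this]
    · exact (hleft h).mono inter_subset_right
  have h2 : ContinuousWithinAt ψ (Icc a b ∩ Ici x) x := by
    rcases eq_or_lt_of_le hx.2 with h | h
    · refine (continuousWithinAt_singleton (f := ψ) (x := x)).mono ?_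
      rintro y ⟨hy1, hy2⟩
      have : y = x := le_antisymm (h ▸ hy1.2) hy2
      simp [this]
    · exact (hright h).mono inter_subset_right
  have := h1.union h2
  refine this.mono fun y hy => ?_
  rcases le_total y x with h | h
  · exact Or.inl ⟨hy, h⟩
  · exact Or.inr ⟨hy, h⟩


lemma piece_mono {f g : ℝ → ℝ} {a b c d : ℝ} (hab : a ≤ b) (hcd : c ≤ d)
    (hf : ContinuousOn f (Icc a b)) (hg : ContinuousOn g (Icc c d))
    (hfm : StrictMonoOn f (Icc a b)) (hgm : StrictMonoOn g (Icc c d))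
    (hac : f a = g c) (hbd : f b = g d) :
    ∃ ψ : ℝ → ℝ, StrictMonoOn ψ (Icc a b) ∧
      Set.MapsTo ψ (Icc a b) (Icc c d) ∧ Set.SurjOn ψ (Icc a b) (Icc c d) ∧
      ψ a = c ∧ ψ b = d ∧ ∀ x ∈ Icc a b, f x = g (ψ x) := by
  have hmemA : a ∈ Icc a b := ⟨le_rfl, hab⟩
  have hmemB : b ∈ Icc a b := ⟨hab, le_rfl⟩
  have hmemC : c ∈ Icc c d := ⟨le_rfl, hcd⟩
  have hmemD : d ∈ Icc c d := ⟨hcd, le_rfl⟩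
  have hginj := hgm.injOn
  have hgIVT : Icc (g c) (g d) ⊆ g '' Icc c d := intermediate_value_Icc hcd hg
  have hfIVT : Icc (f a) (f b) ⊆ f '' Icc a b := intermediate_value_Icc hab hf
  set ψ : ℝ → ℝ := fun x => Function.invFunOn g (Icc c d) (f x) with hψ
  have hex : ∀ x ∈ Icc a b, ∃ y ∈ Icc c d, g y = f x := by
    intro x hx
    have : f x ∈ Icc (g c) (g d) := by
      rw [← hac, ← hbd]
      exact ⟨hfm.monotoneOn hmemA hx hx.1, hfm.monotoneOn hx hmemB hx.2⟩
    obtain ⟨y, hy, hgy⟩ := hgIVT this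
    exact ⟨y, hy, hgy⟩
  have hmaps : Set.MapsTo ψ (Icc a b) (Icc c d) := fun x hx =>
    Function.invFunOn_mem (hex x hx)
  have hcomm : ∀ x ∈ Icc a b, g (ψ x) = f x := fun x hx =>
    Function.invFunOn_eq (hex x hx)
  have hψa : ψ a = c := hginj (hmaps hmemA) hmemC (by rw [hcomm a hmemA, hac])
  have hψb : ψ b = d := hginj (hmaps hmemB) hmemD (by rw [hcomm b hmemB, hbd])
  have hmono : StrictMonoOn ψ (Icc a b) := by
    intro x hx y hy hxy
    have : g (ψ x) < g (ψ y) := by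
      rw [hcomm x hx, hcomm y hy]; exact hfm hx hy hxy
    exact (hgm.lt_iff_lt (hmaps hx) (hmaps hy)).mp this
  have hsurj : Set.SurjOn ψ (Icc a b) (Icc c d) := by
    intro y hy
    have : g y ∈ Icc (f a) (f b) := by
      rw [hac, hbd]
      exact ⟨hgm.monotoneOn hmemC hy hy.1, hgm.monotoneOn hy hmemD hy.2⟩
    obtain ⟨x, hx, hfx⟩ := hfIVT this
    refine ⟨x, hx, hginj (hmaps hx) hy ?_⟩
    rw [hcomm x hx, hfx]
  exact ⟨ψ, hmono, hmaps, hsurj, hψa, hψb, fun x hx => (hcomm x hx).symm⟩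

lemma piece_lemma {f g : ℝ → ℝ} {a b c d : ℝ} (hab : a < b) (hcd : c < d)
    (hf : ContinuousOn f (Icc a b)) (hg : ContinuousOn g (Icc c d))
    (hfm : StrictMonoOn f (Icc a b) ∨ StrictAntiOn f (Icc a b))
    (hgm : StrictMonoOn g (Icc c d) ∨ StrictAntiOn g (Icc c d))
    (hac : f a = g c) (hbd : f b = g d) :
    ∃ ψ : ℝ → ℝ, StrictMonoOn ψ (Icc a b) ∧
      Set.MapsTo ψ (Icc a b) (Icc c d) ∧ Set.SurjOn ψ (Icc a b) (Icc c d) ∧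
      ψ a = c ∧ ψ b = d ∧ ∀ x ∈ Icc a b, f x = g (ψ x) := by
  have hmemA : a ∈ Icc a b := ⟨le_rfl, hab.le⟩
  have hmemB : b ∈ Icc a b := ⟨hab.le, le_rfl⟩
  have hmemC : c ∈ Icc c d := ⟨le_rfl, hcd.le⟩
  have hmemD : d ∈ Icc c d := ⟨hcd.le, le_rfl⟩
  rcases hfm with hfm | hfm
  · have hg' : StrictMonoOn g (Icc c d) := by
      rcases hgm with h | h
      · exact h
      · exfalso
        have h1 : f a < f b := hfm hmemA hmemB hab
        have h2 : g d < g c := h hmemC hmemD hcd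
        rw [hac, hbd] at h1; exact absurd h1 (not_lt.2 h2.le)
    exact piece_mono hab.le hcd.le hf hg hfm hg' hac hbd
  · have hg' : StrictAntiOn g (Icc c d) := by
      rcases hgm with h | h
      · exfalso
        have h1 : f b < f a := hfm hmemA hmemB hab
        have h2 : g c < g d := h hmemC hmemD hcd
        rw [hac, hbd] at h1; exact absurd h1 (not_lt.2 h2.le)
      · exact h
    obtain ⟨ψ, h1, h2, h3, h4, h5, h6⟩ :=
      piece_mono (f := fun x => -f x) (g := fun x => -g x) hab.le hcd.le
        hf.neg hg.neg hfm.neg hg'.neg (by simp [hac]) (by simp [hbd])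
    exact ⟨ψ, h1, h2, h3, h4, h5, fun x hx => by
      have := h6 x hx; simpa [neg_eq_iff_eq_neg] using congrArg Neg.neg this⟩

lemma part_mono {m : ℕ} {p : ℕ → ℝ} (hp : ∀ i < m, p i < p (i + 1)) :
    ∀ i j, i ≤ j → j ≤ m → p i ≤ p j := by
  intro i j hij hjm
  induction j with
  | zero => simp_all
  | succ n ih =>
    rcases Nat.lt_succ_iff_lt_or_eq.mp (Nat.lt_succ_of_le hij) with h | h
    · exact (ih (Nat.lt_succ_iff.mp h) ((Nat.le_succ n).trans hjm)).trans
        (hp n (Nat.lt_of_succ_le hjm)).le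
    · exact h ▸ le_rfl

lemma glue_aux (f g : ℝ → ℝ) (m : ℕ) (p q : ℕ → ℝ)
    (hp : ∀ i < m, p i < p (i + 1)) (hq : ∀ i < m, q i < q (i + 1))
    (hf : ContinuousOn f (Icc (p 0) (p m))) (hg : ContinuousOn g (Icc (q 0) (q m)))
    (hfm : ∀ i < m, StrictMonoOn f (Icc (p i) (p (i + 1))) ∨
      StrictAntiOn f (Icc (p i) (p (i + 1))))
    (hgm : ∀ i < m, StrictMonoOn g (Icc (q i) (q (i + 1))) ∨
      StrictAntiOn g (Icc (q i) (q (i + 1))))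
    (hval : ∀ i ≤ m, f (p i) = g (q i)) :
    ∃ φ : ℝ → ℝ, StrictMonoOn φ (Icc (p 0) (p m)) ∧
      Set.MapsTo φ (Icc (p 0) (p m)) (Icc (q 0) (q m)) ∧
      Set.SurjOn φ (Icc (p 0) (p m)) (Icc (q 0) (q m)) ∧
      (∀ i ≤ m, φ (p i) = q i) ∧ ∀ x ∈ Icc (p 0) (p m), f x = g (φ x) := by
  induction m with
  | zero =>
    refine ⟨fun _ => q 0, ?_, ?_, ?_, ?_, ?_⟩
    · intro x hx y hy hxy
      exact absurd (le_antisymm hxy.le (hy.2.trans hx.1)) hxy.ne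
    · intro x _; exact ⟨le_rfl, le_rfl⟩
    · intro y hy; exact ⟨p 0, ⟨le_rfl, le_rfl⟩, le_antisymm hy.1 hy.2⟩
    · intro i hi; interval_cases i; rfl
    · intro x hx
      have : x = p 0 := le_antisymm hx.2 hx.1
      rw [this]; exact hval 0 le_rfl
  | succ m ih =>
    have hpm : ∀ i j, i ≤ j → j ≤ m + 1 → p i ≤ p j := part_mono hp
    have hqm : ∀ i j, i ≤ j → j ≤ m + 1 → q i ≤ q j := part_mono hq
    obtain ⟨φ₀, h0mono, h0maps, h0surj, h0pts, h0comm⟩ :=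
      ih (fun i hi => hp i (hi.trans m.lt_succ_self))
        (fun i hi => hq i (hi.trans m.lt_succ_self))
        (hf.mono (Icc_subset_Icc_right (hpm m (m + 1) m.le_succ le_rfl)))
        (hg.mono (Icc_subset_Icc_right (hqm m (m + 1) m.le_succ le_rfl)))
        (fun i hi => hfm i (hi.trans m.lt_succ_self))
        (fun i hi => hgm i (hi.trans m.lt_succ_self))
        (fun i hi => hval i (hi.trans m.le_succ))
    obtain ⟨ψ, hψmono, hψmaps, hψsurj, hψa, hψb, hψcomm⟩ :=
      piece_lemma (hp m m.lt_succ_self) (hq m m.lt_succ_self)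
        (hf.mono (Icc_subset_Icc (hpm 0 m (Nat.zero_le m) m.le_succ) le_rfl))
        (hg.mono (Icc_subset_Icc (hqm 0 m (Nat.zero_le m) m.le_succ) le_rfl))
        (hfm m m.lt_succ_self) (hgm m m.lt_succ_self)
        (hval m m.le_succ) (hval (m + 1) le_rfl)
    classical
    set φ : ℝ → ℝ := fun x => if x ≤ p m then φ₀ x else ψ x with hφdef
    have hpm01 : p 0 ≤ p m := hpm 0 m (Nat.zero_le m) m.le_succ
    have hqm01 : q 0 ≤ q m := hqm 0 m (Nat.zero_le m) m.le_succ
    have hpm1 : p m < p (m + 1) := hp m m.lt_succ_self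
    have hqm1 : q m < q (m + 1) := hq m m.lt_succ_self
    have hφ₀pm : φ₀ (p m) = q m := h0pts m le_rfl
    have hle : ∀ x, x ≤ p m → φ x = φ₀ x := fun x hx => if_pos hx
    have hgt : ∀ x, p m < x → φ x = ψ x := fun x hx => if_neg (not_le.2 hx)
    have hmono : StrictMonoOn φ (Icc (p 0) (p (m + 1))) := by
      intro x hx y hy hxy
      rcases le_or_gt x (p m) with hx' | hx'
      · rcases le_or_gt y (p m) with hy' | hy'
        · rw [hle x hx', hle y hy']
          exact h0mono ⟨hx.1, hx'⟩ ⟨hy.1, hy'⟩ hxy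
        · rw [hle x hx', hgt y hy']
          calc φ₀ x ≤ φ₀ (p m) := h0mono.monotoneOn ⟨hx.1, hx'⟩ ⟨hpm01, le_rfl⟩ hx'
          _ = q m := hφ₀pm
          _ = ψ (p m) := hψa.symm
          _ < ψ y := hψmono ⟨le_rfl, hpm1.le⟩ ⟨hy'.le, hy.2⟩ hy'
      · have hy' : p m < y := hx'.trans hxy
        rw [hgt x hx', hgt y hy']
        exact hψmono ⟨hx'.le, hx.2⟩ ⟨hy'.le, hy.2⟩ hxy
    have hmaps : MapsTo φ (Icc (p 0) (p (m + 1))) (Icc (q 0) (q (m + 1))) := by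
      intro x hx
      rcases le_or_gt x (p m) with hx' | hx'
      · rw [hle x hx']
        have := h0maps ⟨hx.1, hx'⟩
        exact ⟨this.1, this.2.trans hqm1.le⟩
      · rw [hgt x hx']
        have := hψmaps ⟨hx'.le, hx.2⟩
        exact ⟨hqm01.trans this.1, this.2⟩
    have hsurj : SurjOn φ (Icc (p 0) (p (m + 1))) (Icc (q 0) (q (m + 1))) := by
      intro y hy
      rcases le_or_gt y (q m) with hy' | hy'
      · obtain ⟨x, hx, hφx⟩ := h0surj ⟨hy.1, hy'⟩
        exact ⟨x, ⟨hx.1, hx.2.trans hpm1.le⟩, by rw [hle x hx.2]; exact hφx⟩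
      · obtain ⟨x, hx, hφx⟩ := hψsurj ⟨hy'.le, hy.2⟩
        have hxgt : p m < x := by
          rcases eq_or_lt_of_le hx.1 with h | h
          · exfalso; rw [← h, hψa] at hφx; exact hy'.ne' hφx.symm
          · exact h
        exact ⟨x, ⟨hpm01.trans hx.1, hx.2⟩, by rw [hgt x hxgt]; exact hφx⟩
    refine ⟨φ, hmono, hmaps, hsurj, ?_, ?_⟩
    · intro i hi
      rcases Nat.lt_succ_iff_lt_or_eq.mp (Nat.lt_succ_of_le hi) with h | h
      · have hi' : i ≤ m := Nat.lt_succ_iff.mp h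
        rw [hle (p i) (hpm i m hi' m.le_succ)]
        exact h0pts i hi'
      · rw [h, hgt (p (m + 1)) hpm1, hψb]
    · intro x hx
      rcases le_or_gt x (p m) with hx' | hx'
      · rw [hle x hx']; exact h0comm x ⟨hx.1, hx'⟩
      · rw [hgt x hx']; exact hψcomm x ⟨hx'.le, hx.2⟩

end StateSeventeenAux

/-- if `f` and `g` are continuous on `[0,1]`, strictly monotone
on the pieces of partitions `p`, `q` of the same length, and have equal values at
corresponding partition points, then there is an increasing homeomorphism
`φ : [0,1] → [0,1]` with `φ (p i) = q i` and `f = g ∘ φ`; in particular `f` and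
`g` are graph-equivalent. -/
theorem matching_monotone_pieces_graph_equiv (f g : ℝ → ℝ)
    (hf : ContinuousOn f (Set.Icc 0 1)) (hg : ContinuousOn g (Set.Icc 0 1))
    (m : ℕ) (hm : 1 ≤ m) (p q : ℕ → ℝ)
    (hp0 : p 0 = 0) (hpm : p m = 1) (hp : ∀ i < m, p i < p (i + 1))
    (hq0 : q 0 = 0) (hqm : q m = 1) (hq : ∀ i < m, q i < q (i + 1))
    (hfm : ∀ i < m, StrictMonoOn f (Set.Icc (p i) (p (i + 1))) ∨
      StrictAntiOn f (Set.Icc (p i) (p (i + 1))))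
    (hgm : ∀ i < m, StrictMonoOn g (Set.Icc (q i) (q (i + 1))) ∨
      StrictAntiOn g (Set.Icc (q i) (q (i + 1))))
    (hval : ∀ i ≤ m, f (p i) = g (q i)) :
    (∃ φ : ℝ → ℝ, ContinuousOn φ (Set.Icc 0 1) ∧ StrictMonoOn φ (Set.Icc 0 1) ∧
      Set.MapsTo φ (Set.Icc 0 1) (Set.Icc 0 1) ∧
      Set.SurjOn φ (Set.Icc 0 1) (Set.Icc 0 1) ∧
      (∀ i ≤ m, φ (p i) = q i) ∧
      ∀ x ∈ Set.Icc (0:ℝ) 1, f x = g (φ x)) ∧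
    GraphEquiv f g := by
  obtain ⟨φ, hmono, hmaps, hsurj, hpts, hcomm⟩ :=
    StateSeventeenAux.glue_aux f g m p q hp hq
      (by rw [hp0, hpm]; exact hf) (by rw [hq0, hqm]; exact hg) hfm hgm hval
  rw [hp0, hpm] at hmono hmaps hsurj hcomm
  rw [hq0, hqm] at hmaps hsurj
  have hφ0 : φ 0 = 0 := by have := hpts 0 (Nat.zero_le m); rwa [hp0, hq0] at this
  have hφ1 : φ 1 = 1 := by have := hpts m le_rfl; rwa [hpm, hqm] at this
  have hcont : ContinuousOn φ (Set.Icc 0 1) :=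
    StateSeventeenAux.strictMonoOn_surjOn_continuousOn hmono hmaps hsurj hφ0 hφ1
  exact ⟨⟨φ, hcont, hmono, hmaps, hsurj, hpts, hcomm⟩,
    ⟨φ, hcont, hmono, hmaps, hsurj, hcomm⟩⟩
end
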